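/- arXiv:2408.05486 — 2 statements merged into one kernel-verified Lean document; each statement's English description precedes it below -/
import Mathlib

section
/- If 𝒳 is a connected combinatorial complex and ρ : 𝒳̃ → 𝒳 is a CC covering, then all fibers of ρ have the same size; namely |ρ⁻¹(x)| = |𝒳̃₀| / |𝒳₀| for every cell x of 𝒳, where 𝒳̃₀ and 𝒳₀ denote the sets of 0-cells of 𝒳̃ and 𝒳. -/
/-! Basic framework: combinatorial complexes, natural neighborhood functions,
CC coverings, Hasse graphs, and higher-order message-passing (HOMP) models. -/

namespace TDL

/-- The raw data of a combinatorial complex over an ambient node type `S`: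
a set of cells (finite, nonempty subsets of nodes) and a rank function. -/
structure PreCC (S : Type*) where
  cells : Set (Finset S)
  rk : Finset S → ℕ

/-- A (featureless) combinatorial complex.  The node set is implicitly the set of
elements appearing in cells; every singleton of such a node is a cell of rank `0`,
cells are nonempty, there are finitely many cells, and the rank function is
monotone with respect to inclusion. -/
structure CC (S : Type*) extends PreCC S where
  cells_finite : cells.Finite
  nonempty_of_mem : ∀ x ∈ cells, x.Nonempty
  singleton_mem : ∀ x ∈ cells, ∀ s ∈ x, ({s} : Finset S) ∈ cells
  rk_singleton : ∀ s : S, ({s} : Finset S) ∈ cells → rk {s} = 0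
  rk_mono : ∀ x ∈ cells, ∀ y ∈ cells, x ⊆ y → rk x ≤ rk y

/-- Names of the natural neighborhood functions: `(r₁,r₂)`-adjacency,
coadjacency, incidence and co-incidence. -/
inductive NbhdKind : Type
  | adj (r₁ r₂ : ℕ)
  | coadj (r₁ r₂ : ℕ)
  | inc (r₁ r₂ : ℕ)
  | coinc (r₁ r₂ : ℕ)
  deriving DecidableEq

/-- The two ranks mentioned by a neighborhood kind are bounded by `ℓ`. -/
def NbhdKind.bounded (ℓ : ℕ) : NbhdKind → Prop
  | .adj r₁ r₂ => r₁ ≤ ℓ ∧ r₂ ≤ ℓ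
  | .coadj r₁ r₂ => r₁ ≤ ℓ ∧ r₂ ≤ ℓ
  | .inc r₁ r₂ => r₁ ≤ ℓ ∧ r₂ ≤ ℓ
  | .coinc r₁ r₂ => r₁ ≤ ℓ ∧ r₂ ≤ ℓ

namespace PreCC

variable {S : Type*}

/-- The `r`-skeleton: the set of cells of rank `r`. -/
def skel (X : PreCC S) (r : ℕ) : Set (Finset S) := {x | x ∈ X.cells ∧ X.rk x = r}

/-- The natural neighborhood functions of a complex. -/
def nbhd (X : PreCC S) : NbhdKind → Finset S → Set (Finset S)
  | .adj r₁ r₂, x => {y | x ∈ X.skel r₁ ∧ y ∈ X.skel r₁ ∧ ∃ z ∈ X.skel r₂, x ⊆ z ∧ y ⊆ z}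
  | .coadj r₁ r₂, x => {y | x ∈ X.skel r₁ ∧ y ∈ X.skel r₁ ∧ ∃ z ∈ X.skel r₂, z ⊆ x ∧ z ⊆ y}
  | .inc r₁ r₂, x => {y | x ∈ X.skel r₁ ∧ y ∈ X.skel r₂ ∧ x ⊆ y}
  | .coinc r₁ r₂, x => {y | x ∈ X.skel r₁ ∧ y ∈ X.skel r₂ ∧ y ⊆ x}

/-- The Hasse graph of a complex: vertices are cells, and `x, y` are joined by an
edge whenever `x ⊆ y` and `rk x = rk y - 1` (or symmetrically). -/
def hasse (X : PreCC S) : SimpleGraph {x : Finset S // x ∈ X.cells} where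
  Adj a b := (a.1 ⊆ b.1 ∧ X.rk a.1 + 1 = X.rk b.1) ∨ (b.1 ⊆ a.1 ∧ X.rk b.1 + 1 = X.rk a.1)
  symm := by
    constructor
    rintro a b (h | h)
    · exact Or.inr h
    · exact Or.inl h
  loopless := ⟨by rintro a (⟨-, h⟩ | ⟨-, h⟩) <;> omega⟩

end PreCC

/-- `ρ` is a CC covering of `X` by `Xt`: it maps cells of `Xt` to cells of `X`
surjectively, preserves ranks, and is a local isomorphism with respect to every
natural neighborhood function. -/
structure IsCovering {S' S : Type*} (Xt : PreCC S') (X : PreCC S)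
    (ρ : Finset S' → Finset S) : Prop where
  mem : ∀ x' ∈ Xt.cells, ρ x' ∈ X.cells
  surj : ∀ x ∈ X.cells, ∃ x' ∈ Xt.cells, ρ x' = x
  rank : ∀ x' ∈ Xt.cells, X.rk (ρ x') = Xt.rk x'
  locBij : ∀ x' ∈ Xt.cells, ∀ N : NbhdKind, Set.BijOn ρ (Xt.nbhd N x') (X.nbhd N (ρ x'))

open Classical in
/-- The multiset underlying a finite set (junk value `0` for infinite sets). -/
noncomputable def setMultiset {α : Type*} (s : Set α) : Multiset α :=
  if h : s.Finite then h.toFinset.val else 0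

/-- A higher-order message-passing (HOMP) model over a feature space `D`, for
featureless complexes of dimension at most `ℓ`: a number of layers `T`, an initial
constant feature, and, per layer, message functions (per neighborhood function and
rank), permutation-invariant aggregations (functions of multisets), a combination
operator over the family of neighborhood functions with ranks at most `ℓ`,
activations, and a readout defined on multisets. -/
structure HOMP (D : Type*) (ℓ : ℕ) where
  T : ℕ
  init : D
  msg : ℕ → NbhdKind → ℕ → D → D → D
  agg : ℕ → NbhdKind → Multiset D → D
  comb : ℕ → ({N : NbhdKind // N.bounded ℓ} → D) → D
  act : ℕ → D → D
  readout : Multiset D → D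

namespace HOMP

variable {D : Type*} {ℓ : ℕ} {S : Type*}

/-- The cell feature maps computed by a HOMP model on a complex:
`h⁰_x` is the initial constant, and
`h^{t+1}_x = β_t (⊗_N (⊕ {{ m_{t,N,rk x}(h^t_x, h^t_y) : y ∈ N(x) }}))`. -/
noncomputable def feat (M : HOMP D ℓ) (X : PreCC S) : ℕ → Finset S → D
  | 0, _ => M.init
  | t + 1, x =>
      M.act t <| M.comb t fun N =>
        M.agg t N.1 <|
          (setMultiset (X.nbhd N.1 x)).map fun y =>
            M.msg t N.1 (X.rk x) (M.feat X t x) (M.feat X t y)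

/-- The output of a HOMP model: the readout of the multiset of final features. -/
noncomputable def out (M : HOMP D ℓ) (X : PreCC S) : D :=
  M.readout <| (setMultiset X.cells).map fun x => M.feat X M.T x

end HOMP

end TDL

namespace TDL

section FiberAux

variable {S' S : Type} {Xt : CC S'} {X : CC S} {ρ : Finset S' → Finset S}

/-- The fiber of `ρ` over a cell `x`. -/
private def fib (Xt : PreCC S') (ρ : Finset S' → Finset S) (x : Finset S) : Set (Finset S') :=
  {x' ∈ Xt.cells | ρ x' = x}

private lemma rk_fib (hρ : IsCovering Xt.toPreCC X.toPreCC ρ) {x' : Finset S'}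
    (hx' : x' ∈ Xt.toPreCC.cells) : Xt.rk x' = X.rk (ρ x') :=
  (hρ.rank x' hx').symm

/-- Fibers over Hasse-adjacent cells have the same cardinality. -/
private lemma fib_edge (hρ : IsCovering Xt.toPreCC X.toPreCC ρ)
    {a b : Finset S} (ha : a ∈ X.cells) (hb : b ∈ X.cells)
    (hab : a ⊆ b) (hr : X.rk a + 1 = X.rk b) :
    (fib Xt.toPreCC ρ a).ncard = (fib Xt.toPreCC ρ b).ncard := by
  set r := X.toPreCC.rk a with hrdef
  set P : Set (Finset S' × Finset S') :=
    {p | p.1 ∈ fib Xt.toPreCC ρ a ∧ p.2 ∈ fib Xt.toPreCC ρ b ∧ p.1 ⊆ p.2} with hP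
  -- membership facts for pairs
  have hmem1 : ∀ p ∈ P, p.1 ∈ Xt.toPreCC.skel r := by
    rintro p ⟨⟨h1, h2⟩, -, -⟩
    exact ⟨h1, by rw [rk_fib hρ h1, h2]⟩
  have hmem2 : ∀ p ∈ P, p.2 ∈ Xt.toPreCC.skel (r + 1) := by
    rintro p ⟨-, ⟨h1, h2⟩, -⟩
    exact ⟨h1, by rw [rk_fib hρ h1, h2, ← hr]⟩
  have hnb1 : ∀ p ∈ P, p.2 ∈ Xt.toPreCC.nbhd (.inc r (r + 1)) p.1 := by
    intro p hp
    exact ⟨hmem1 p hp, hmem2 p hp, hp.2.2⟩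
  have hnb2 : ∀ p ∈ P, p.1 ∈ Xt.toPreCC.nbhd (.coinc (r + 1) r) p.2 := by
    intro p hp
    exact ⟨hmem2 p hp, hmem1 p hp, hp.2.2⟩
  have hbij1 : Set.BijOn Prod.fst P (fib Xt.toPreCC ρ a) := by
    refine ⟨fun p hp => hp.1, ?_, ?_⟩
    · rintro p hp q hq hpq
      have hloc := (hρ.locBij p.1 hp.1.1 (.inc r (r + 1))).injOn
      have h2 : p.2 = q.2 := by
        refine hloc (hnb1 p hp) (by rw [hpq]; exact hnb1 q hq) ?_
        rw [hp.2.1.2, hq.2.1.2]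
      exact Prod.ext hpq h2
    · rintro x' ⟨hx'c, hx'ρ⟩
      have hbmem : b ∈ X.toPreCC.nbhd (.inc r (r + 1)) (ρ x') := by
        rw [hx'ρ]
        exact ⟨⟨ha, rfl⟩, ⟨hb, hr.symm⟩, hab⟩
      obtain ⟨y', hy', hρy'⟩ := (hρ.locBij x' hx'c (.inc r (r + 1))).surjOn hbmem
      obtain ⟨hy1, hy2, hy3⟩ := hy'
      exact ⟨(x', y'), ⟨⟨hx'c, hx'ρ⟩, ⟨hy2.1, hρy'⟩, hy3⟩, rfl⟩
  have hbij2 : Set.BijOn Prod.snd P (fib Xt.toPreCC ρ b) := by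
    refine ⟨fun p hp => hp.2.1, ?_, ?_⟩
    · rintro p hp q hq hpq
      have hloc := (hρ.locBij p.2 hp.2.1.1 (.coinc (r + 1) r)).injOn
      have h1 : p.1 = q.1 := by
        refine hloc (hnb2 p hp) (by rw [hpq]; exact hnb2 q hq) ?_
        rw [hp.1.2, hq.1.2]
      exact Prod.ext h1 hpq
    · rintro y' ⟨hy'c, hy'ρ⟩
      have hamem : a ∈ X.toPreCC.nbhd (.coinc (r + 1) r) (ρ y') := by
        rw [hy'ρ]
        exact ⟨⟨hb, hr.symm⟩, ⟨ha, rfl⟩, hab⟩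
      obtain ⟨x', hx', hρx'⟩ := (hρ.locBij y' hy'c (.coinc (r + 1) r)).surjOn hamem
      obtain ⟨hx1, hx2, hx3⟩ := hx'
      exact ⟨(x', y'), ⟨⟨hx2.1, hρx'⟩, ⟨hy'c, hy'ρ⟩, hx3⟩, rfl⟩
  rw [← hbij1.image_eq, ← hbij2.image_eq,
    Set.ncard_image_of_injOn hbij1.injOn, Set.ncard_image_of_injOn hbij2.injOn]

/-- Fibers over Hasse-reachable cells have the same cardinality. -/
private lemma fib_reachable (hρ : IsCovering Xt.toPreCC X.toPreCC ρ)
    {a b : {x : Finset S // x ∈ X.toPreCC.cells}}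
    (h : X.toPreCC.hasse.Reachable a b) :
    (fib Xt.toPreCC ρ a.1).ncard = (fib Xt.toPreCC ρ b.1).ncard := by
  have hadjcase : ∀ u v : {x : Finset S // x ∈ X.toPreCC.cells},
      X.toPreCC.hasse.Adj u v →
      (fib Xt.toPreCC ρ u.1).ncard = (fib Xt.toPreCC ρ v.1).ncard := by
    rintro u v (⟨h1, h2⟩ | ⟨h1, h2⟩)
    · exact fib_edge hρ u.2 v.2 h1 h2
    · exact (fib_edge hρ v.2 u.2 h1 h2).symm
  obtain ⟨w⟩ := h
  induction w with
  | nil => rfl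
  | cons hadj _ ih => exact (hadjcase _ _ hadj).trans ih

end FiberAux

/-- If `X` is a connected combinatorial complex and `ρ : Xt → X` is a CC
covering, then all fibers of `ρ` have the same size, namely
`|ρ⁻¹(x)| = |Xt₀| / |X₀|` for every cell `x` of `X`, where `Xt₀` and `X₀` are the
sets of `0`-cells. -/
theorem covering_fiber_card
    {S' S : Type} (Xt : CC S') (X : CC S) (ρ : Finset S' → Finset S)
    (hconn : X.toPreCC.hasse.Connected)
    (hρ : IsCovering Xt.toPreCC X.toPreCC ρ)
    (x : Finset S) (hx : x ∈ X.cells) :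
    {x' ∈ Xt.cells | ρ x' = x}.ncard
      = (Xt.toPreCC.skel 0).ncard / (X.toPreCC.skel 0).ncard := by
  classical
  have hXtfin : Xt.toPreCC.cells.Finite := Xt.cells_finite
  have hskelt : (Xt.toPreCC.skel 0).Finite := hXtfin.subset fun a h => h.1
  have hskel : (X.toPreCC.skel 0).Finite := X.cells_finite.subset fun a h => h.1
  set c := (fib Xt.toPreCC ρ x).ncard with hc
  -- all fibers over cells of `X` have cardinality `c`
  have hconst : ∀ z ∈ X.toPreCC.cells, (fib Xt.toPreCC ρ z).ncard = c := fun z hz =>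
    fib_reachable hρ (hconn.preconnected ⟨z, hz⟩ ⟨x, hx⟩)
  -- counting on the 0-skeleta
  set A := hskelt.toFinset with hA
  set B := hskel.toFinset with hB
  have hmap : ∀ a ∈ A, ρ a ∈ B := by
    intro a haA
    rw [hA, Set.Finite.mem_toFinset] at haA
    rw [hB, Set.Finite.mem_toFinset]
    exact ⟨hρ.mem a haA.1, by rw [hρ.rank a haA.1, haA.2]⟩
  have hcount := Finset.card_eq_sum_card_fiberwise hmap
  have hterm : ∀ b ∈ B, (A.filter fun a => ρ a = b).card = c := by
    intro b hbB
    rw [hB, Set.Finite.mem_toFinset] at hbB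
    have hfibfin : (fib Xt.toPreCC ρ b).Finite := hXtfin.subset fun a h => h.1
    have hset : A.filter (fun a => ρ a = b) = hfibfin.toFinset := by
      ext a
      simp only [Finset.mem_filter, hA, Set.Finite.mem_toFinset]
      constructor
      · rintro ⟨⟨h1, -⟩, h2⟩; exact ⟨h1, h2⟩
      · rintro ⟨h1, h2⟩
        exact ⟨⟨h1, by rw [rk_fib hρ h1, h2, hbB.2]⟩, h2⟩
    rw [hset, ← Set.ncard_eq_toFinset_card _ hfibfin]
    exact hconst b hbB.1
  rw [Finset.sum_congr rfl hterm, Finset.sum_const, smul_eq_mul] at hcount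
  have hBne : B.card ≠ 0 := by
    obtain ⟨s, hs⟩ := X.nonempty_of_mem x hx
    have hsing : ({s} : Finset S) ∈ X.cells := X.singleton_mem x hx s hs
    have : ({s} : Finset S) ∈ B := by
      rw [hB, Set.Finite.mem_toFinset]
      exact ⟨hsing, X.rk_singleton s hsing⟩
    exact Finset.card_ne_zero_of_mem this
  have hLHS : {x' ∈ Xt.cells | ρ x' = x}.ncard = c := rfl
  rw [hLHS, Set.ncard_eq_toFinset_card _ hskelt, Set.ncard_eq_toFinset_card _ hskel]
  show c = A.card / B.card
  rw [hcount, Nat.mul_div_cancel_left c (Nat.pos_of_ne_zero hBne)]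

end TDL
end

section
/- If T_{p₁,…,p_ℓ} and T_{p'₁,…,p'_ℓ} are ℓ-dimensional torus CCs such that p₁⋯p_ℓ = p'₁⋯p'_ℓ (equal numbers of 0-cells) and p_j ≥ 3, p'_j ≥ 3 for all j ∈ {1,…,ℓ}, then for every HOMP model M, M(T_{p₁,…,p_ℓ}) = M(T_{p'₁,…,p'_ℓ}). -/
namespace TDL

/-- The cell `s_k` of the `ℓ`-dimensional torus: the set of nodes `s + k'` for
`k' ≤ k`, with coordinatewise addition modulo `p j`. -/
def torusCell {ℓ : ℕ} (p : Fin ℓ → ℕ) (s : ∀ i, ZMod (p i)) (k : Fin ℓ → Bool) :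
    Finset (∀ i, ZMod (p i)) :=
  (Finset.univ.filter fun k' : Fin ℓ → Bool => ∀ i, k' i = true → k i = true).image
    fun k' i => s i + if k' i then 1 else 0

/-- The number of ones in `k ∈ {0,1}^ℓ`, i.e. the rank of the cell `s_k`. -/
def torusRank {ℓ : ℕ} (k : Fin ℓ → Bool) : ℕ :=
  (Finset.univ.filter fun i => k i = true).card

/-- The `ℓ`-dimensional torus combinatorial complex `T_{p₁,…,p_ℓ}`: nodes are
`ℤ/p₁ × ⋯ × ℤ/p_ℓ`, cells are the sets `s_k`, and the rank of `s_k` is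
`k₁ + ⋯ + k_ℓ`. -/
noncomputable def torusPre {ℓ : ℕ} (p : Fin ℓ → ℕ) : PreCC (∀ i, ZMod (p i)) where
  cells := {x | ∃ s k, x = torusCell p s k}
  rk x := sInf {r | ∃ s k, x = torusCell p s k ∧ r = torusRank k}

end TDL

namespace TDL

section Aux
variable {ℓ : ℕ} {p : Fin ℓ → ℕ}

lemma zmod_one_ne_zero {n : ℕ} (hn : 3 ≤ n) : (1 : ZMod n) ≠ 0 := by
  haveI : NeZero n := ⟨by omega⟩
  intro h
  have : ((1:ℕ) : ZMod n) = 0 := by push_cast; exact h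
  rw [ZMod.natCast_eq_zero_iff] at this
  have := Nat.le_of_dvd (by norm_num) this
  omega

lemma zmod_two_ne_zero {n : ℕ} (hn : 3 ≤ n) : (2 : ZMod n) ≠ 0 := by
  haveI : NeZero n := ⟨by omega⟩
  intro h
  have : ((2:ℕ) : ZMod n) = 0 := by push_cast; exact h
  rw [ZMod.natCast_eq_zero_iff] at this
  have := Nat.le_of_dvd (by norm_num) this
  omega

lemma mem_torusCell (hp : ∀ i, 3 ≤ p i) {s v : ∀ i, ZMod (p i)} {k : Fin ℓ → Bool} :
    v ∈ torusCell p s k ↔ ∀ i, v i = s i ∨ (k i = true ∧ v i = s i + 1) := by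
  constructor
  · rintro hv
    simp only [torusCell, Finset.mem_image, Finset.mem_filter, Finset.mem_univ, true_and] at hv
    obtain ⟨k', hk', rfl⟩ := hv
    intro i
    by_cases h : k' i
    · exact Or.inr ⟨hk' i h, by simp [h]⟩
    · simp [h]
  · intro hv
    simp only [torusCell, Finset.mem_image, Finset.mem_filter, Finset.mem_univ, true_and]
    refine ⟨fun i => decide (v i = s i + 1), ?_, ?_⟩
    · intro i hi
      rcases hv i with h | ⟨hk, h⟩
      · exfalso
        have : v i = s i + 1 := of_decide_eq_true hi
        rw [h] at this
        exact zmod_one_ne_zero (hp i) (by linear_combination -this)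
      · exact hk
    · funext i
      rcases hv i with h | ⟨hk, h⟩
      · have : decide (v i = s i + 1) = false := by
          simp only [decide_eq_false_iff_not]
          rw [h]; intro hh
          exact zmod_one_ne_zero (hp i) (by linear_combination -hh)
        simp [this, h]
      · simp [h]

lemma self_mem_torusCell (hp : ∀ i, 3 ≤ p i) (s : ∀ i, ZMod (p i)) (k : Fin ℓ → Bool) :
    s ∈ torusCell p s k := (mem_torusCell hp).2 fun i => Or.inl rfl

lemma top_mem_torusCell (hp : ∀ i, 3 ≤ p i) (s : ∀ i, ZMod (p i)) (k : Fin ℓ → Bool) :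
    (fun i => s i + if k i then 1 else 0) ∈ torusCell p s k := by
  refine (mem_torusCell hp).2 fun i => ?_
  by_cases h : k i <;> simp [h]

lemma torusCell_subset_iff (hp : ∀ i, 3 ≤ p i) {s t : ∀ i, ZMod (p i)} {k m : Fin ℓ → Bool} :
    torusCell p s k ⊆ torusCell p t m ↔
      ∀ i, (k i = true → m i = true) ∧
        (s i = t i ∨ (m i = true ∧ k i = false ∧ s i = t i + 1)) := by
  constructor
  · intro hsub i
    have hA := ((mem_torusCell hp).1 (hsub (self_mem_torusCell hp s k))) i
    have hB := ((mem_torusCell hp).1 (hsub (top_mem_torusCell hp s k))) i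
    by_cases hk : k i
    · simp only [hk, if_true] at hB
      rcases hA with hA | ⟨hm, hA⟩
      · rcases hB with hB | ⟨hm, hB⟩
        · exfalso; rw [hA] at hB
          exact zmod_one_ne_zero (hp i) (by linear_combination hB)
        · have : s i = t i := by linear_combination hB
          exact ⟨fun _ => hm, Or.inl this⟩
      · exfalso
        rcases hB with hB | ⟨_, hB⟩
        · rw [hA] at hB
          exact zmod_two_ne_zero (hp i) (by linear_combination hB)
        · have : s i = t i := by linear_combination hB
          rw [this] at hA
          exact zmod_one_ne_zero (hp i) (by linear_combination -hA)
    · rcases hA with hA | ⟨hm, hA⟩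
      · exact ⟨fun h => absurd h (by simp [hk]), Or.inl hA⟩
      · exact ⟨fun h => absurd h (by simp [hk]), Or.inr ⟨hm, by simp [hk], hA⟩⟩
  · intro h v hv
    refine (mem_torusCell hp).2 fun i => ?_
    obtain ⟨hkm, hst⟩ := h i
    rcases (mem_torusCell hp).1 hv i with hvi | ⟨hki, hvi⟩
    · rcases hst with hst | ⟨hm, _, hst⟩
      · exact Or.inl (hvi.trans hst)
      · exact Or.inr ⟨hm, hvi.trans hst⟩
    · rcases hst with hst | ⟨hm, hkf, hst⟩
      · exact Or.inr ⟨hkm hki, by rw [hvi, hst]⟩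
      · exact absurd hki (by simp [hkf])

lemma torusCell_inj (hp : ∀ i, 3 ≤ p i) {s t : ∀ i, ZMod (p i)} {k m : Fin ℓ → Bool}
    (h : torusCell p s k = torusCell p t m) : s = t ∧ k = m := by
  have h1 := (torusCell_subset_iff hp).1 (le_of_eq h)
  have h2 := (torusCell_subset_iff hp).1 (le_of_eq h.symm)
  have hkm : k = m := by
    funext i
    have := (h1 i).1
    have := (h2 i).1
    cases hk : k i <;> cases hm : m i <;> simp_all
  subst hkm
  refine ⟨funext fun i => ?_, rfl⟩
  rcases (h1 i).2 with h | ⟨hkt, hkf, _⟩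
  · exact h
  · simp [hkt] at hkf

lemma torusPre_rk (hp : ∀ i, 3 ≤ p i) (s : ∀ i, ZMod (p i)) (k : Fin ℓ → Bool) :
    (torusPre p).rk (torusCell p s k) = torusRank k := by
  have : {r | ∃ s' k', torusCell p s k = torusCell p s' k' ∧ r = torusRank k'}
      = {torusRank k} := by
    ext r
    simp only [Set.mem_setOf_eq, Set.mem_singleton_iff]
    constructor
    · rintro ⟨s', k', h, rfl⟩
      rw [(torusCell_inj hp h).2]
    · rintro rfl; exact ⟨s, k, rfl, rfl⟩
  show sInf _ = _
  rw [this, csInf_singleton]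

lemma torusCell_mem_cells (s : ∀ i, ZMod (p i)) (k : Fin ℓ → Bool) :
    torusCell p s k ∈ (torusPre p).cells := ⟨s, k, rfl⟩

/-- descriptors -/
def ofs {n : ℕ} (a : Fin 3) : ZMod n := (a.val : ZMod n) - 1

abbrev Desc (ℓ : ℕ) := (Fin ℓ → Fin 3) × (Fin ℓ → Bool)

def real (p : Fin ℓ → ℕ) (s : ∀ i, ZMod (p i)) (q : Desc ℓ) : Finset (∀ i, ZMod (p i)) :=
  torusCell p (fun i => s i + ofs (q.1 i)) q.2

lemma ofs_eq_iff {n : ℕ} (hn : 3 ≤ n) {a b : Fin 3} : (ofs a : ZMod n) = ofs b ↔ a = b := by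
  constructor
  · intro h
    have h1 := zmod_one_ne_zero hn
    have h2 := zmod_two_ne_zero hn
    fin_cases a <;> fin_cases b <;> simp_all [ofs] <;>
      first
        | rfl
        | (exact absurd (by linear_combination h) h1)
        | (exact absurd (by linear_combination h) h2)
        | (exact absurd (by linear_combination -h) h1)
        | (exact absurd (by linear_combination -h) h2)
  · rintro rfl; rfl

lemma ofs_succ_iff {n : ℕ} (hn : 3 ≤ n) {a b : Fin 3} (h : ¬(a = 0 ∧ b = 2)) :
    (ofs a : ZMod n) = ofs b + 1 ↔ (a : ℕ) = (b : ℕ) + 1 := by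
  have h1 := zmod_one_ne_zero hn
  have h2 := zmod_two_ne_zero hn
  fin_cases a <;> fin_cases b <;> simp_all [ofs] <;>
    first
      | (intro hh
         first
          | exact h1 (by linear_combination hh)
          | exact h2 (by linear_combination hh)
          | exact h1 (by linear_combination -hh)
          | exact h2 (by linear_combination -hh))
      | norm_num

lemma ofs_one {n : ℕ} : (ofs 1 : ZMod n) = 0 := by simp [ofs]

lemma real_one (p : Fin ℓ → ℕ) (s : ∀ i, ZMod (p i)) (k : Fin ℓ → Bool) :
    real p s (fun _ => 1, k) = torusCell p s k := by
  unfold real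
  congr 1
  funext i
  rw [ofs_one, add_zero]

def DIncl {ℓ : ℕ} (q₁ q₂ : Desc ℓ) : Prop :=
  ∀ i, (q₁.2 i = true → q₂.2 i = true) ∧
    (q₁.1 i = q₂.1 i ∨
      (q₂.2 i = true ∧ q₁.2 i = false ∧ ((q₁.1 i : ℕ)) = (q₂.1 i : ℕ) + 1))

lemma real_subset_iff (hp : ∀ i, 3 ≤ p i) (s : ∀ i, ZMod (p i)) {q₁ q₂ : Desc ℓ}
    (h : ∀ i, ¬(q₁.1 i = 0 ∧ q₂.1 i = 2)) :
    real p s q₁ ⊆ real p s q₂ ↔ DIncl q₁ q₂ := by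
  rw [real, real, torusCell_subset_iff hp]
  unfold DIncl
  apply forall_congr'
  intro i
  refine and_congr Iff.rfl (or_congr ?_ (and_congr Iff.rfl (and_congr Iff.rfl ?_)))
  · rw [add_right_inj]; exact ofs_eq_iff (hp i)
  · rw [add_assoc, add_right_inj]; exact ofs_succ_iff (hp i) (h i)

lemma real_injOn (hp : ∀ i, 3 ≤ p i) (s : ∀ i, ZMod (p i)) :
    Function.Injective (real p s) := by
  rintro ⟨d, m⟩ ⟨d', m'⟩ h
  obtain ⟨hb, hm⟩ := torusCell_inj hp h
  have hd : d = d' := by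
    funext i
    have := congrFun hb i
    simp only [add_right_inj] at this
    exact (ofs_eq_iff (hp i)).1 this
  simp only at hm
  simp [hd, hm]

lemma ofs_mk_succ {n : ℕ} {b : Fin 3} (h : (b : ℕ) + 1 < 3) :
    (ofs ⟨(b : ℕ) + 1, h⟩ : ZMod n) = ofs b + 1 := by
  simp only [ofs]
  push_cast
  ring

lemma ofs_mk_pred {n : ℕ} {b : Fin 3} (hb : 1 ≤ (b : ℕ)) (h : (b : ℕ) - 1 < 3) :
    (ofs ⟨(b : ℕ) - 1, h⟩ : ZMod n) = ofs b - 1 := by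
  simp only [ofs]
  rw [Nat.cast_sub hb]
  push_cast
  ring

lemma repr_of_subset (hp : ∀ i, 3 ≤ p i) {s t : ∀ i, ZMod (p i)} {w : Fin ℓ → Bool}
    {q₂ : Desc ℓ} (hq : ∀ i, q₂.1 i ≠ 2)
    (hsub : torusCell p t w ⊆ real p s q₂) :
    ∃ e : Fin ℓ → Fin 3, (∀ i, e i = q₂.1 i ∨ (e i : ℕ) = (q₂.1 i : ℕ) + 1) ∧
      t = fun i => s i + ofs (e i) := by
  have hc := (torusCell_subset_iff hp).1 hsub
  have hlt : ∀ i, (q₂.1 i : ℕ) + 1 < 3 := by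
    intro i
    have h2 : (q₂.1 i : ℕ) ≠ 2 := fun hh => hq i (Fin.ext hh)
    have := (q₂.1 i).isLt
    omega
  refine ⟨fun i => if t i = s i + ofs (q₂.1 i) then q₂.1 i else ⟨(q₂.1 i : ℕ) + 1, hlt i⟩,
    fun i => ?_, funext fun i => ?_⟩
  · by_cases hcase : t i = s i + ofs (q₂.1 i) <;> simp [hcase]
  · by_cases hcase : t i = s i + ofs (q₂.1 i)
    · simp only [if_pos hcase]; exact hcase
    · rcases (hc i).2 with hh | ⟨_, _, hh⟩
      · exact absurd hh hcase
      · simp only [if_neg hcase, ofs_mk_succ (hlt i)]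
        rw [hh]; ring

lemma repr_of_supset (hp : ∀ i, 3 ≤ p i) {s t : ∀ i, ZMod (p i)} {w : Fin ℓ → Bool}
    {q₁ : Desc ℓ} (hq : ∀ i, q₁.1 i ≠ 0)
    (hsub : real p s q₁ ⊆ torusCell p t w) :
    ∃ e : Fin ℓ → Fin 3, (∀ i, e i = q₁.1 i ∨ (e i : ℕ) + 1 = (q₁.1 i : ℕ)) ∧
      t = fun i => s i + ofs (e i) := by
  have hc := (torusCell_subset_iff hp).1 hsub
  have hge : ∀ i, 1 ≤ (q₁.1 i : ℕ) := by
    intro i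
    have h0 : (q₁.1 i : ℕ) ≠ 0 := fun hh => hq i (Fin.ext hh)
    omega
  have hlt : ∀ i, (q₁.1 i : ℕ) - 1 < 3 := by
    intro i; have := (q₁.1 i).isLt; omega
  refine ⟨fun i => if s i + ofs (q₁.1 i) = t i then q₁.1 i else ⟨(q₁.1 i : ℕ) - 1, hlt i⟩,
    fun i => ?_, funext fun i => ?_⟩
  · by_cases hcase : s i + ofs (q₁.1 i) = t i <;> simp [hcase]
    · right; have := hge i; omega
  · by_cases hcase : s i + ofs (q₁.1 i) = t i
    · simp only [if_pos hcase]; exact hcase.symm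
    · rcases (hc i).2 with hh | ⟨_, _, hh⟩
      · exact absurd hh hcase
      · simp only [if_neg hcase, ofs_mk_pred (hge i) (hlt i)]
        rw [eq_comm] at hh
        linear_combination hh

lemma cell_mem_skel_iff (hp : ∀ i, 3 ≤ p i) {s : ∀ i, ZMod (p i)} {k : Fin ℓ → Bool} {r : ℕ} :
    torusCell p s k ∈ (torusPre p).skel r ↔ torusRank k = r := by
  constructor
  · rintro ⟨-, hr⟩
    rw [torusPre_rk hp] at hr
    exact hr
  · intro hr
    exact ⟨torusCell_mem_cells s k, by rw [torusPre_rk hp, hr]⟩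

lemma mem_skel_iff (hp : ∀ i, 3 ≤ p i) {x : Finset (∀ i, ZMod (p i))} {r : ℕ} :
    x ∈ (torusPre p).skel r ↔ ∃ s k, torusRank k = r ∧ x = torusCell p s k := by
  constructor
  · rintro ⟨⟨s, k, rfl⟩, hr⟩
    rw [torusPre_rk hp] at hr
    exact ⟨s, k, hr, rfl⟩
  · rintro ⟨s, k, hr, rfl⟩
    exact (cell_mem_skel_iff hp).2 hr

lemma real_mem_skel (hp : ∀ i, 3 ≤ p i) (s : ∀ i, ZMod (p i)) (q : Desc ℓ) {r : ℕ}
    (h : torusRank q.2 = r) : real p s q ∈ (torusPre p).skel r :=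
  (cell_mem_skel_iff hp).2 h

def one3 {ℓ : ℕ} : Fin ℓ → Fin 3 := fun _ => 1

def Dset (ℓ : ℕ) : NbhdKind → (Fin ℓ → Bool) → Set (Desc ℓ)
  | .adj r₁ r₂, k => {q | torusRank k = r₁ ∧ torusRank q.2 = r₁ ∧
      ∃ w : Desc ℓ, torusRank w.2 = r₂ ∧ DIncl (one3, k) w ∧ DIncl q w}
  | .coadj r₁ r₂, k => {q | torusRank k = r₁ ∧ torusRank q.2 = r₁ ∧
      ∃ w : Desc ℓ, torusRank w.2 = r₂ ∧ DIncl w (one3, k) ∧ DIncl w q}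
  | .inc r₁ r₂, k => {q | torusRank k = r₁ ∧ torusRank q.2 = r₂ ∧ DIncl (one3, k) q}
  | .coinc r₁ r₂, k => {q | torusRank k = r₁ ∧ torusRank q.2 = r₂ ∧ DIncl q (one3, k)}

lemma DIncl.ne_two {k : Fin ℓ → Bool} {w : Desc ℓ} (h : DIncl (one3, k) w) :
    ∀ i, w.1 i ≠ 2 := by
  intro i hi
  rcases (h i).2 with hh | ⟨-, -, hh⟩
  · have hh' : (1 : Fin 3) = w.1 i := hh
    rw [hi] at hh'
    exact absurd hh' (by decide)
  · have hh' : (1 : ℕ) = (w.1 i : ℕ) + 1 := hh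
    rw [hi] at hh'
    exact absurd hh' (by decide)

lemma DIncl.ne_zero {k : Fin ℓ → Bool} {w : Desc ℓ} (h : DIncl w (one3, k)) :
    ∀ i, w.1 i ≠ 0 := by
  intro i hi
  rcases (h i).2 with hh | ⟨-, -, hh⟩
  · have hh' : w.1 i = (1 : Fin 3) := hh
    rw [hi] at hh'
    exact absurd hh' (by decide)
  · have hh' : (w.1 i : ℕ) = (1 : ℕ) + 1 := hh
    rw [hi] at hh'
    exact absurd hh' (by decide)

lemma noWrap_one3_left {k : Fin ℓ → Bool} (q : Desc ℓ) :
    ∀ i, ¬(((one3, k) : Desc ℓ).1 i = 0 ∧ q.1 i = 2) := by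
  rintro i ⟨h, -⟩
  exact absurd h (show ¬(1 : Fin 3) = 0 by decide)

lemma noWrap_one3_right {k : Fin ℓ → Bool} (q : Desc ℓ) :
    ∀ i, ¬(q.1 i = 0 ∧ ((one3, k) : Desc ℓ).1 i = 2) := by
  rintro i ⟨-, h⟩
  exact absurd h (show ¬(1 : Fin 3) = 2 by decide)

lemma nbhd_inc_eq (hp : ∀ i, 3 ≤ p i) (s : ∀ i, ZMod (p i)) (k : Fin ℓ → Bool) (r₁ r₂ : ℕ) :
    (torusPre p).nbhd (.inc r₁ r₂) (torusCell p s k) = real p s '' Dset ℓ (.inc r₁ r₂) k := by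
  ext y
  simp only [PreCC.nbhd, Set.mem_setOf_eq, Set.mem_image, Dset]
  constructor
  · rintro ⟨hx, hy, hsub⟩
    obtain ⟨t, m, hm, rfl⟩ := (mem_skel_iff hp).1 hy
    rw [← real_one p s k] at hsub
    obtain ⟨e, -, rfl⟩ := repr_of_supset hp (fun i => show (1 : Fin 3) ≠ 0 by decide) hsub
    refine ⟨(e, m), ⟨(cell_mem_skel_iff hp).1 hx, hm, ?_⟩, rfl⟩
    exact (real_subset_iff hp s (noWrap_one3_left (e, m))).1 hsub
  · rintro ⟨q, ⟨hr1, hr2, hD⟩, rfl⟩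
    refine ⟨(cell_mem_skel_iff hp).2 hr1, real_mem_skel hp s q hr2, ?_⟩
    rw [← real_one p s k]
    exact (real_subset_iff hp s (noWrap_one3_left q)).2 hD

lemma nbhd_coinc_eq (hp : ∀ i, 3 ≤ p i) (s : ∀ i, ZMod (p i)) (k : Fin ℓ → Bool) (r₁ r₂ : ℕ) :
    (torusPre p).nbhd (.coinc r₁ r₂) (torusCell p s k) =
      real p s '' Dset ℓ (.coinc r₁ r₂) k := by
  ext y
  simp only [PreCC.nbhd, Set.mem_setOf_eq, Set.mem_image, Dset]
  constructor
  · rintro ⟨hx, hy, hsub⟩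
    obtain ⟨t, m, hm, rfl⟩ := (mem_skel_iff hp).1 hy
    rw [← real_one p s k] at hsub
    obtain ⟨e, -, rfl⟩ := repr_of_subset hp (fun i => show (1 : Fin 3) ≠ 2 by decide) hsub
    refine ⟨(e, m), ⟨(cell_mem_skel_iff hp).1 hx, hm, ?_⟩, rfl⟩
    exact (real_subset_iff hp s (noWrap_one3_right _)).1 hsub
  · rintro ⟨q, ⟨hr1, hr2, hD⟩, rfl⟩
    refine ⟨(cell_mem_skel_iff hp).2 hr1, real_mem_skel hp s q hr2, ?_⟩
    rw [← real_one p s k]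
    exact (real_subset_iff hp s (noWrap_one3_right _)).2 hD

lemma nbhd_adj_eq (hp : ∀ i, 3 ≤ p i) (s : ∀ i, ZMod (p i)) (k : Fin ℓ → Bool) (r₁ r₂ : ℕ) :
    (torusPre p).nbhd (.adj r₁ r₂) (torusCell p s k) = real p s '' Dset ℓ (.adj r₁ r₂) k := by
  ext y
  simp only [PreCC.nbhd, Set.mem_setOf_eq, Set.mem_image, Dset]
  constructor
  · rintro ⟨hx, hy, z, hz, hxz, hyz⟩
    obtain ⟨tz, wz, hwz, rfl⟩ := (mem_skel_iff hp).1 hz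
    rw [← real_one p s k] at hxz
    obtain ⟨ez, hez, rfl⟩ := repr_of_supset hp (fun i => show (1 : Fin 3) ≠ 0 by decide) hxz
    have hez2 : ∀ i, ((ez, wz) : Desc ℓ).1 i ≠ 2 := by
      intro i hi
      have hi' : ez i = 2 := hi
      rcases hez i with hh | hh
      · have hh' : ez i = (1 : Fin 3) := hh
        rw [hi'] at hh'
        exact absurd hh' (by decide)
      · have hh' : (ez i : ℕ) + 1 = 1 := hh
        rw [hi'] at hh'
        exact absurd hh' (by decide)
    obtain ⟨t, m, hm, rfl⟩ := (mem_skel_iff hp).1 hy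
    obtain ⟨ey, -, rfl⟩ := repr_of_subset hp hez2 hyz
    refine ⟨(ey, m), ⟨(cell_mem_skel_iff hp).1 hx, hm, (ez, wz), hwz, ?_, ?_⟩, rfl⟩
    · exact (real_subset_iff hp s (noWrap_one3_left (ez, wz))).1 hxz
    · exact (real_subset_iff hp s (fun i h => hez2 i h.2)).1 hyz
  · rintro ⟨q, ⟨hr1, hr2, w, hw, hD1, hD2⟩, rfl⟩
    refine ⟨(cell_mem_skel_iff hp).2 hr1, real_mem_skel hp s q hr2,
      real p s w, real_mem_skel hp s w hw, ?_, ?_⟩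
    · rw [← real_one p s k]
      exact (real_subset_iff hp s (noWrap_one3_left w)).2 hD1
    · exact (real_subset_iff hp s (fun i h => hD1.ne_two i h.2)).2 hD2

lemma nbhd_coadj_eq (hp : ∀ i, 3 ≤ p i) (s : ∀ i, ZMod (p i)) (k : Fin ℓ → Bool) (r₁ r₂ : ℕ) :
    (torusPre p).nbhd (.coadj r₁ r₂) (torusCell p s k) =
      real p s '' Dset ℓ (.coadj r₁ r₂) k := by
  ext y
  simp only [PreCC.nbhd, Set.mem_setOf_eq, Set.mem_image, Dset]
  constructor
  · rintro ⟨hx, hy, z, hz, hzx, hzy⟩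
    obtain ⟨tz, wz, hwz, rfl⟩ := (mem_skel_iff hp).1 hz
    rw [← real_one p s k] at hzx
    obtain ⟨ez, hez, rfl⟩ := repr_of_subset hp (fun i => show (1 : Fin 3) ≠ 2 by decide) hzx
    have hez0 : ∀ i, ((ez, wz) : Desc ℓ).1 i ≠ 0 := by
      intro i hi
      have hi' : ez i = 0 := hi
      rcases hez i with hh | hh
      · have hh' : ez i = (1 : Fin 3) := hh
        rw [hi'] at hh'
        exact absurd hh' (by decide)
      · have hh' : (ez i : ℕ) = 1 + 1 := hh
        rw [hi'] at hh'
        exact absurd hh' (by decide)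
    obtain ⟨t, m, hm, rfl⟩ := (mem_skel_iff hp).1 hy
    obtain ⟨ey, -, rfl⟩ := repr_of_supset hp hez0 hzy
    refine ⟨(ey, m), ⟨(cell_mem_skel_iff hp).1 hx, hm, (ez, wz), hwz, ?_, ?_⟩, rfl⟩
    · exact (real_subset_iff hp s (noWrap_one3_right _)).1 hzx
    · exact (real_subset_iff hp s (fun i h => hez0 i h.1)).1 hzy
  · rintro ⟨q, ⟨hr1, hr2, w, hw, hD1, hD2⟩, rfl⟩
    refine ⟨(cell_mem_skel_iff hp).2 hr1, real_mem_skel hp s q hr2,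
      real p s w, real_mem_skel hp s w hw, ?_, ?_⟩
    · rw [← real_one p s k]
      exact (real_subset_iff hp s (noWrap_one3_right _)).2 hD1
    · exact (real_subset_iff hp s (fun i h => hD1.ne_zero i h.1)).2 hD2

lemma nbhd_eq (hp : ∀ i, 3 ≤ p i) (s : ∀ i, ZMod (p i)) (k : Fin ℓ → Bool) (N : NbhdKind) :
    (torusPre p).nbhd N (torusCell p s k) = real p s '' Dset ℓ N k := by
  cases N with
  | adj r₁ r₂ => exact nbhd_adj_eq hp s k r₁ r₂
  | coadj r₁ r₂ => exact nbhd_coadj_eq hp s k r₁ r₂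
  | inc r₁ r₂ => exact nbhd_inc_eq hp s k r₁ r₂
  | coinc r₁ r₂ => exact nbhd_coinc_eq hp s k r₁ r₂

open Classical in
lemma setMultiset_image (f : α → β) (s : Set α) (hs : s.Finite) (hf : Set.InjOn f s) :
    setMultiset (f '' s) = (setMultiset s).map f := by
  classical
  rw [setMultiset, setMultiset, dif_pos hs, dif_pos (hs.image f),
    Set.Finite.toFinset_image f hs (hs.image f)]
  exact Finset.image_val_of_injOn (by rwa [Set.Finite.coe_toFinset])

lemma setMultiset_univ (A : Type*) [Fintype A] :
    setMultiset (Set.univ : Set A) = (Finset.univ : Finset A).val := by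
  classical
  rw [setMultiset, dif_pos Set.finite_univ]
  congr 1
  ext a
  simp

lemma feat_torus (M : HOMP D ℓ') (p p' : Fin ℓ → ℕ)
    (hp : ∀ i, 3 ≤ p i) (hp' : ∀ i, 3 ≤ p' i) (t : ℕ) :
    ∀ (s : ∀ i, ZMod (p i)) (s' : ∀ i, ZMod (p' i)) (k : Fin ℓ → Bool),
      M.feat (torusPre p) t (torusCell p s k) = M.feat (torusPre p') t (torusCell p' s' k) := by
  induction t with
  | zero => intro s s' k; rfl
  | succ t ih =>
    intro s s' k
    simp only [HOMP.feat]
    congr 1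
    congr 1
    funext N
    congr 1
    rw [nbhd_eq hp s k N.1, nbhd_eq hp' s' k N.1,
      setMultiset_image _ _ (Set.toFinite _) ((real_injOn hp s).injOn),
      setMultiset_image _ _ (Set.toFinite _) ((real_injOn hp' s').injOn),
      Multiset.map_map, Multiset.map_map]
    congr 1
    funext q
    simp only [Function.comp_apply]
    rw [torusPre_rk hp, torusPre_rk hp']
    have h1 := ih s s' k
    have h2 : M.feat (torusPre p) t (real p s q) = M.feat (torusPre p') t (real p' s' q) :=
      ih (fun i => s i + ofs (q.1 i)) (fun i => s' i + ofs (q.1 i)) q.2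
    rw [h1, h2]

end Aux

lemma torusPre_cells {ℓ : ℕ} (p : Fin ℓ → ℕ) :
    (torusPre p).cells =
      (fun sk : (∀ i, ZMod (p i)) × (Fin ℓ → Bool) => torusCell p sk.1 sk.2) '' Set.univ := by
  ext x
  simp only [torusPre, Set.image_univ, Set.mem_range, Set.mem_setOf_eq]
  constructor
  · rintro ⟨s, k, h⟩; exact ⟨(s, k), h.symm⟩
  · rintro ⟨⟨s, k⟩, h⟩; exact ⟨s, k, h.symm⟩


/-- Tori with the same number of `0`-cells (`p₁⋯p_ℓ = p'₁⋯p'_ℓ`) and all cycle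
lengths at least `3` are indistinguishable by every HOMP model. -/
theorem torus_homp_indistinguishable {ℓ : ℕ} (p p' : Fin ℓ → ℕ)
    (hp : ∀ j, 3 ≤ p j) (hp' : ∀ j, 3 ≤ p' j)
    (hcard : ∏ i, p i = ∏ i, p' i)
    {D : Type} {ℓ' : ℕ} (M : HOMP D ℓ') :
    M.out (torusPre p) = M.out (torusPre p') := by
  classical
  haveI : ∀ i, NeZero (p i) := fun i => ⟨by have := hp i; omega⟩
  haveI : ∀ i, NeZero (p' i) := fun i => ⟨by have := hp' i; omega⟩
  have hinj : Function.Injective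
      (fun sk : (∀ i, ZMod (p i)) × (Fin ℓ → Bool) => torusCell p sk.1 sk.2) := by
    rintro ⟨s, k⟩ ⟨t, m⟩ h
    obtain ⟨h1, h2⟩ := torusCell_inj hp h
    simp only at h1 h2
    simp [h1, h2]
  have hinj' : Function.Injective
      (fun sk : (∀ i, ZMod (p' i)) × (Fin ℓ → Bool) => torusCell p' sk.1 sk.2) := by
    rintro ⟨s, k⟩ ⟨t, m⟩ h
    obtain ⟨h1, h2⟩ := torusCell_inj hp' h
    simp only at h1 h2
    simp [h1, h2]
  unfold HOMP.out
  congr 1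
  rw [torusPre_cells p, torusPre_cells p',
    setMultiset_image _ _ Set.finite_univ hinj.injOn,
    setMultiset_image _ _ Set.finite_univ hinj'.injOn,
    setMultiset_univ, setMultiset_univ, Multiset.map_map, Multiset.map_map]
  have hcards : Fintype.card (∀ i, ZMod (p i)) = Fintype.card (∀ i, ZMod (p' i)) := by
    rw [Fintype.card_pi, Fintype.card_pi]
    simpa [ZMod.card] using hcard
  set G : (Fin ℓ → Bool) → D :=
    fun k => M.feat (torusPre p') M.T (torusCell p' (fun _ => 0) k) with hG
  have hL : ∀ sk : (∀ i, ZMod (p i)) × (Fin ℓ → Bool),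
      M.feat (torusPre p) M.T (torusCell p sk.1 sk.2) = G sk.2 := fun sk =>
    feat_torus M p p' hp hp' M.T sk.1 (fun _ => 0) sk.2
  have hR : ∀ sk : (∀ i, ZMod (p' i)) × (Fin ℓ → Bool),
      M.feat (torusPre p') M.T (torusCell p' sk.1 sk.2) = G sk.2 := fun sk =>
    feat_torus M p' p' hp' hp' M.T sk.1 (fun _ => 0) sk.2
  calc (Finset.univ.val.map fun sk : (∀ i, ZMod (p i)) × (Fin ℓ → Bool) =>
        (fun x => M.feat (torusPre p) M.T x) (torusCell p sk.1 sk.2))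
      = Finset.univ.val.map
          (fun sk : (∀ i, ZMod (p i)) × (Fin ℓ → Bool) => G sk.2) := by
        congr 1; funext sk; exact hL sk
    _ = Finset.univ.val.map
          (fun sk : (∀ i, ZMod (p' i)) × (Fin ℓ → Bool) => G sk.2) := by
        have e := Fintype.equivOfCardEq hcards
        let E := Equiv.prodCongr e (Equiv.refl (Fin ℓ → Bool))
        rw [← Finset.map_univ_equiv E, Finset.map_val, Multiset.map_map]
        congr 1
    _ = _ := by
        congr 1; funext sk; exact (hR sk).symm

end TDL
end
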